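/- Let M be a map with flag set F and generators s0, s1, s2, and let r0, r1, r2 be the truncation generators on F × {0,1,2}. Then the number of orbits of ⟨r1, r2⟩ on F × {0,1,2} equals twice the number of orbits of ⟨s0, s2⟩ on F; that is, the truncated map Tr(M) has exactly 2|E(M)| vertices, where |E(M)| is the number of edges of M. -/
import Mathlib


open MulAction

private lemma mem_orbit_apply' {X : Type*} {S : Set (Equiv.Perm X)} {g : Equiv.Perm X}
    (hg : g ∈ S) {x y : X} (hy : y ∈ MulAction.orbit (↥(Subgroup.closure S)) x) :
    g y ∈ MulAction.orbit (↥(Subgroup.closure S)) x := by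
  obtain ⟨⟨h, hh⟩, rfl⟩ := hy
  exact ⟨⟨g, Subgroup.subset_closure hg⟩ * ⟨h, hh⟩, rfl⟩

private lemma orbit_subset_of_invariant {X : Type*} {a b : Equiv.Perm X}
    (ha : a * a = 1) (hb : b * b = 1)
    (T : Set X) (hTa : ∀ y ∈ T, a y ∈ T) (hTb : ∀ y ∈ T, b y ∈ T)
    {x : X} (hx : x ∈ T) :
    MulAction.orbit (↥(Subgroup.closure ({a, b} : Set (Equiv.Perm X)))) x ⊆ T := by
  have key : ∀ g ∈ Subgroup.closure ({a, b} : Set (Equiv.Perm X)),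
      (∀ y ∈ T, g y ∈ T) ∧ (∀ y ∈ T, g⁻¹ y ∈ T) := by
    intro g hg
    induction hg using Subgroup.closure_induction with
    | mem z hz =>
      rcases hz with rfl | rfl
      · exact ⟨hTa, by rw [inv_eq_of_mul_eq_one_right ha]; exact hTa⟩
      · exact ⟨hTb, by rw [inv_eq_of_mul_eq_one_right hb]; exact hTb⟩
    | one => simpa using ⟨fun y hy => hy, fun y hy => hy⟩
    | mul u v hu hv hu' hv' =>
      refine ⟨fun y hy => ?_, fun y hy => ?_⟩
      · simpa using hu'.1 _ (hv'.1 _ hy)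
      · simpa [mul_inv_rev] using hv'.2 _ (hu'.2 _ hy)
    | inv u hu hu' => exact ⟨hu'.2, by simpa using hu'.1⟩
  rintro _ ⟨⟨g, hg⟩, rfl⟩
  exact (key g hg).1 x hx

private lemma card_orbit_quotient {G : Type*} [Group G] {α : Type*} [Finite α] [MulAction G α]
    (k : ℕ) (h : ∀ x : α, Nat.card (MulAction.orbit G x) = k) :
    Nat.card (MulAction.orbitRel.Quotient G α) * k = Nat.card α := by
  classical
  haveI : Fintype α := Fintype.ofFinite _
  haveI : Fintype (orbitRel.Quotient G α) := Fintype.ofFinite _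
  haveI : ∀ ω : orbitRel.Quotient G α, Fintype (MulAction.orbit G (Quotient.out ω)) :=
    fun _ => Fintype.ofFinite _
  calc Nat.card (orbitRel.Quotient G α) * k
      = ∑ _ω : orbitRel.Quotient G α, k := by
        rw [Finset.sum_const, Finset.card_univ, smul_eq_mul, Nat.card_eq_fintype_card]
    _ = ∑ ω : orbitRel.Quotient G α, Fintype.card (MulAction.orbit G (Quotient.out ω)) := by
        refine Finset.sum_congr rfl fun ω _ => ?_
        rw [← Nat.card_eq_fintype_card, h]
    _ = Fintype.card (Σ ω : orbitRel.Quotient G α, MulAction.orbit G (Quotient.out ω)) := by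
        rw [Fintype.card_sigma]
    _ = Nat.card α := by
        rw [← Nat.card_eq_fintype_card, ← Nat.card_congr (MulAction.selfEquivSigmaOrbits G α)]

private lemma edge_orbit_card {F : Type*} [Fintype F]
    (s0 s2 : Equiv.Perm F)
    (hs0i : s0 * s0 = 1) (hs0f : ∀ x, s0 x ≠ x)
    (hs2i : s2 * s2 = 1) (hs2f : ∀ x, s2 x ≠ x)
    (hcomm : s0 * s2 = s2 * s0)
    (hs02f : ∀ x, (s0 * s2) x ≠ x) (x : F) :
    Nat.card (MulAction.orbit (↥(Subgroup.closure ({s0, s2} : Set (Equiv.Perm F)))) x) = 4 := by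
  have hs0' : ∀ y, s0 (s0 y) = y := fun y => by
    have := congrArg (fun p : Equiv.Perm F => p y) hs0i; simpa using this
  have hs2' : ∀ y, s2 (s2 y) = y := fun y => by
    have := congrArg (fun p : Equiv.Perm F => p y) hs2i; simpa using this
  have hc : ∀ y, s0 (s2 y) = s2 (s0 y) := fun y => by
    have := congrArg (fun p : Equiv.Perm F => p y) hcomm; simpa using this
  have h02 : ∀ y, s0 (s2 y) ≠ y := fun y => by simpa using hs02f y
  set T : Set F := {x, s0 x, s2 x, s0 (s2 x)} with hT
  set O := MulAction.orbit (↥(Subgroup.closure ({s0, s2} : Set (Equiv.Perm F)))) x with hO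
  have hmem : ∀ y ∈ T, y = x ∨ y = s0 x ∨ y = s2 x ∨ y = s0 (s2 x) := by
    intro y hy; simpa [hT] using hy
  have hsub : O ⊆ T := by
    refine orbit_subset_of_invariant hs0i hs2i T ?_ ?_ (by simp [hT])
    · intro y hy
      rcases hmem y hy with rfl | rfl | rfl | rfl
      · simp [hT]
      · simp [hT, hs0' x]
      · simp [hT]
      · simp [hT, hs0' (s2 x)]
    · intro y hy
      rcases hmem y hy with rfl | rfl | rfl | rfl
      · simp [hT]
      · rw [← hc x]; simp [hT]
      · simp [hT, hs2' x]
      · rw [← hc (s2 x), hs2' x]; simp [hT]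
  have hsup : T ⊆ O := by
    have h0 : x ∈ O := MulAction.mem_orbit_self x
    have h1 : s0 x ∈ O := mem_orbit_apply' (by simp) h0
    have h2 : s2 x ∈ O := mem_orbit_apply' (by simp) h0
    have h3 : s0 (s2 x) ∈ O := mem_orbit_apply' (by simp) h2
    intro y hy
    rcases hmem y hy with rfl | rfl | rfl | rfl <;> assumption
  have hOT : O = T := le_antisymm hsub hsup
  rw [hOT, Nat.card_coe_set_eq, hT]
  have d1 : x ≠ s0 x := (hs0f x).symm
  have d2 : x ≠ s2 x := (hs2f x).symm
  have d3 : x ≠ s0 (s2 x) := (h02 x).symm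
  have d4 : s0 x ≠ s2 x := by
    intro h
    exact h02 x (by rw [← h, hs0' x])
  have d5 : s0 x ≠ s0 (s2 x) := fun h => hs2f x (s0.injective h).symm
  have d6 : s2 x ≠ s0 (s2 x) := fun h => hs0f (s2 x) h.symm
  rw [Set.ncard_insert_of_notMem (by simp [d1, d2, d3]),
      Set.ncard_insert_of_notMem (by simp [d4, d5]),
      Set.ncard_pair d6]

private lemma vertex_orbit_card {F : Type*} [Fintype F]
    (s2 : Equiv.Perm F) (hs2i : s2 * s2 = 1) (hs2f : ∀ x, s2 x ≠ x)
    (r1 r2 : Equiv.Perm (F × Fin 3))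
    (hr1i : r1 * r1 = 1) (hr2i : r2 * r2 = 1)
    (hr1 : ∀ Φ : F, r1 (Φ, 0) = (s2 Φ, 0) ∧ r1 (Φ, 1) = (Φ, 2) ∧ r1 (Φ, 2) = (Φ, 1))
    (hr2 : ∀ Φ : F, r2 (Φ, 0) = (Φ, 2) ∧ r2 (Φ, 1) = (s2 Φ, 1) ∧ r2 (Φ, 2) = (Φ, 0))
    (z : F × Fin 3) :
    Nat.card (MulAction.orbit
      (↥(Subgroup.closure ({r1, r2} : Set (Equiv.Perm (F × Fin 3))))) z) = 6 := by
  obtain ⟨Φ, i⟩ := z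
  have hs2' : ∀ y, s2 (s2 y) = y := fun y => by
    have := congrArg (fun p : Equiv.Perm F => p y) hs2i; simpa using this
  set T : Set (F × Fin 3) :=
    {(Φ, 0), (Φ, 1), (Φ, 2), (s2 Φ, 0), (s2 Φ, 1), (s2 Φ, 2)} with hT
  set O := MulAction.orbit
      (↥(Subgroup.closure ({r1, r2} : Set (Equiv.Perm (F × Fin 3))))) (Φ, i) with hO
  have hmem : ∀ y ∈ T, y = (Φ, 0) ∨ y = (Φ, 1) ∨ y = (Φ, 2) ∨
      y = (s2 Φ, 0) ∨ y = (s2 Φ, 1) ∨ y = (s2 Φ, 2) := by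
    intro y hy; simpa [hT] using hy
  have hzT : (Φ, i) ∈ T := by fin_cases i <;> simp [hT]
  have hsub : O ⊆ T := by
    refine orbit_subset_of_invariant hr1i hr2i T ?_ ?_ hzT
    · intro y hy
      rcases hmem y hy with rfl | rfl | rfl | rfl | rfl | rfl
      · rw [(hr1 Φ).1]; simp [hT]
      · rw [(hr1 Φ).2.1]; simp [hT]
      · rw [(hr1 Φ).2.2]; simp [hT]
      · rw [(hr1 (s2 Φ)).1, hs2' Φ]; simp [hT]
      · rw [(hr1 (s2 Φ)).2.1]; simp [hT]
      · rw [(hr1 (s2 Φ)).2.2]; simp [hT]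
    · intro y hy
      rcases hmem y hy with rfl | rfl | rfl | rfl | rfl | rfl
      · rw [(hr2 Φ).1]; simp [hT]
      · rw [(hr2 Φ).2.1]; simp [hT]
      · rw [(hr2 Φ).2.2]; simp [hT]
      · rw [(hr2 (s2 Φ)).1]; simp [hT]
      · rw [(hr2 (s2 Φ)).2.1, hs2' Φ]; simp [hT]
      · rw [(hr2 (s2 Φ)).2.2]; simp [hT]
  have hsup : T ⊆ O := by
    have a1 : ∀ y ∈ O, r1 y ∈ O := fun y hy => mem_orbit_apply' (by simp) hy
    have a2 : ∀ y ∈ O, r2 y ∈ O := fun y hy => mem_orbit_apply' (by simp) hy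
    have hself : (Φ, i) ∈ O := MulAction.mem_orbit_self _
    have h0 : (Φ, (0 : Fin 3)) ∈ O := by
      fin_cases i
      · exact hself
      · have t1 : r1 (Φ, (1 : Fin 3)) ∈ O := a1 (Φ, 1) hself
        rw [(hr1 Φ).2.1] at t1
        have t2 := a2 _ t1
        rwa [(hr2 Φ).2.2] at t2
      · have t1 : r2 (Φ, (2 : Fin 3)) ∈ O := a2 (Φ, 2) hself
        rwa [(hr2 Φ).2.2] at t1
    have h2 : (Φ, (2 : Fin 3)) ∈ O := by
      have := a2 _ h0; rwa [(hr2 Φ).1] at this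
    have h1 : (Φ, (1 : Fin 3)) ∈ O := by
      have := a1 _ h2; rwa [(hr1 Φ).2.2] at this
    have g0 : (s2 Φ, (0 : Fin 3)) ∈ O := by
      have := a1 _ h0; rwa [(hr1 Φ).1] at this
    have g1 : (s2 Φ, (1 : Fin 3)) ∈ O := by
      have := a2 _ h1; rwa [(hr2 Φ).2.1] at this
    have g2 : (s2 Φ, (2 : Fin 3)) ∈ O := by
      have := a1 _ g1; rwa [(hr1 (s2 Φ)).2.1] at this
    intro y hy
    rcases hmem y hy with rfl | rfl | rfl | rfl | rfl | rfl <;> assumption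
  have hOT : O = T := le_antisymm hsub hsup
  rw [hOT, Nat.card_coe_set_eq, hT]
  have hne : Φ ≠ s2 Φ := (hs2f Φ).symm
  rw [Set.ncard_insert_of_notMem (by simp [Prod.ext_iff, hne]),
      Set.ncard_insert_of_notMem (by simp [Prod.ext_iff, hne]),
      Set.ncard_insert_of_notMem (by simp [Prod.ext_iff, hne]),
      Set.ncard_insert_of_notMem (by simp [Prod.ext_iff]),
      Set.ncard_insert_of_notMem (by simp [Prod.ext_iff]),
      Set.ncard_singleton]



/-- the number of vertices of Tr(M) (orbits of ⟨r1,r2⟩ on F × {0,1,2}) equals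
twice the number of edges of M (orbits of ⟨s0,s2⟩ on F). -/
theorem truncation_vertex_count
    {F : Type*} [Fintype F] [Nonempty F]
    (s0 s1 s2 : Equiv.Perm F)
    (hs0i : s0 * s0 = 1) (hs0f : ∀ x, s0 x ≠ x)
    (hs1i : s1 * s1 = 1) (hs1f : ∀ x, s1 x ≠ x)
    (hs2i : s2 * s2 = 1) (hs2f : ∀ x, s2 x ≠ x)
    (hcomm : s0 * s2 = s2 * s0)
    (hs02i : (s0 * s2) * (s0 * s2) = 1) (hs02f : ∀ x, (s0 * s2) x ≠ x)
    (htrans : ∀ x y : F, ∃ g ∈ Subgroup.closure ({s0, s1, s2} : Set (Equiv.Perm F)), g x = y)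
    (r0 r1 r2 : Equiv.Perm (F × Fin 3))
    (hr0 : ∀ Φ : F, r0 (Φ, 0) = (s1 Φ, 0) ∧ r0 (Φ, 1) = (s0 Φ, 1) ∧ r0 (Φ, 2) = (s1 Φ, 2))
    (hr1 : ∀ Φ : F, r1 (Φ, 0) = (s2 Φ, 0) ∧ r1 (Φ, 1) = (Φ, 2) ∧ r1 (Φ, 2) = (Φ, 1))
    (hr2 : ∀ Φ : F, r2 (Φ, 0) = (Φ, 2) ∧ r2 (Φ, 1) = (s2 Φ, 1) ∧ r2 (Φ, 2) = (Φ, 0)) :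
    Nat.card (MulAction.orbitRel.Quotient (↥(Subgroup.closure ({r1, r2} : Set (Equiv.Perm (F × Fin 3))))) (F × Fin 3)) =
      2 * Nat.card (MulAction.orbitRel.Quotient (↥(Subgroup.closure ({s0, s2} : Set (Equiv.Perm F)))) F) := by
  classical
  have hs2' : ∀ y, s2 (s2 y) = y := fun y => by
    have := congrArg (fun p : Equiv.Perm F => p y) hs2i; simpa using this
  have key1 : ∀ (Φ : F) (j : Fin 3), r1 (r1 (Φ, j)) = (Φ, j) := by
    intro Φ j
    fin_cases j
    · show r1 (r1 (Φ, (0 : Fin 3))) = (Φ, 0)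
      rw [(hr1 Φ).1, (hr1 (s2 Φ)).1, hs2']
    · show r1 (r1 (Φ, (1 : Fin 3))) = (Φ, 1)
      rw [(hr1 Φ).2.1, (hr1 Φ).2.2]
    · show r1 (r1 (Φ, (2 : Fin 3))) = (Φ, 2)
      rw [(hr1 Φ).2.2, (hr1 Φ).2.1]
  have hr1i : r1 * r1 = 1 := Equiv.ext fun z => key1 z.1 z.2
  have key2 : ∀ (Φ : F) (j : Fin 3), r2 (r2 (Φ, j)) = (Φ, j) := by
    intro Φ j
    fin_cases j
    · show r2 (r2 (Φ, (0 : Fin 3))) = (Φ, 0)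
      rw [(hr2 Φ).1, (hr2 Φ).2.2]
    · show r2 (r2 (Φ, (1 : Fin 3))) = (Φ, 1)
      rw [(hr2 Φ).2.1, (hr2 (s2 Φ)).2.1, hs2']
    · show r2 (r2 (Φ, (2 : Fin 3))) = (Φ, 2)
      rw [(hr2 Φ).2.2, (hr2 Φ).1]
  have hr2i : r2 * r2 = 1 := Equiv.ext fun z => key2 z.1 z.2
  have e1 := card_orbit_quotient 6 (vertex_orbit_card s2 hs2i hs2f r1 r2 hr1i hr2i hr1 hr2)
  have e2 := card_orbit_quotient 4 (edge_orbit_card s0 s2 hs0i hs0f hs2i hs2f hcomm hs02f)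
  have e3 : Nat.card (F × Fin 3) = 3 * Nat.card F := by
    rw [Nat.card_prod]
    simp [Nat.card_eq_fintype_card, Nat.mul_comm]
  omega
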